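/- Let p ≥ 5 be a prime and let n be an odd positive integer. There is no finite connected pentavalent graph Γ with exactly 4n vertices admitting an arc-transitive group of automorphisms G ≤ Aut Γ with G isomorphic to SL(2,p). -/
import Mathlib

/-- The automorphism group of a simple graph acts on its vertices. -/
instance graphAutMulAction {V : Type*} {Γ : SimpleGraph V} : MulAction (Γ ≃g Γ) V where
  smul g v := g v
  one_smul _ := rfl
  mul_smul _ _ _ := rfl


lemma card_SL2_dvd (p : ℕ) [Fact p.Prime] (hp : 5 ≤ p) :
    8 ∣ Nat.card (Matrix.SpecialLinearGroup (Fin 2) (ZMod p)) := by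
  have hsurj : Function.Surjective
      (Matrix.GeneralLinearGroup.det : GL (Fin 2) (ZMod p) →* (ZMod p)ˣ) := by
    intro u
    have hd : Matrix.det !![(u:ZMod p),0;0,1] ≠ 0 := by simp [Matrix.det_fin_two]
    refine ⟨Matrix.GeneralLinearGroup.mkOfDetNeZero _ hd, ?_⟩
    apply Units.ext
    rw [Matrix.GeneralLinearGroup.val_det_apply]
    simp [Matrix.GeneralLinearGroup.mkOfDetNeZero, Matrix.GeneralLinearGroup.mk',
      Matrix.unitOfDetInvertible, Matrix.det_fin_two]
  have ekernel : Nonempty (Matrix.SpecialLinearGroup (Fin 2) (ZMod p) ≃*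
      (Matrix.GeneralLinearGroup.det : GL (Fin 2) (ZMod p) →* (ZMod p)ˣ).ker) :=
    ⟨{ toFun := fun A => ⟨Matrix.SpecialLinearGroup.toGL A, by simp [MonoidHom.mem_ker]⟩
       invFun := fun B => ⟨(B.1 : Matrix (Fin 2) (Fin 2) (ZMod p)), by
        have := B.2
        rw [MonoidHom.mem_ker, Units.ext_iff] at this
        rw [Matrix.GeneralLinearGroup.val_det_apply] at this
        exact this⟩
       left_inv := fun A => rfl
       right_inv := fun B => by ext : 2; rfl
       map_mul' := fun A B => by ext : 3; rfl }⟩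
  obtain ⟨ek⟩ := ekernel
  have hquot := Nat.card_congr
    (QuotientGroup.quotientKerEquivOfSurjective _ hsurj).toEquiv
  have hGL := Subgroup.card_eq_card_quotient_mul_card_subgroup
    (Matrix.GeneralLinearGroup.det : GL (Fin 2) (ZMod p) →* (ZMod p)ˣ).ker
  have hcardU : Nat.card (ZMod p)ˣ = p - 1 := by
    rw [Nat.card_eq_fintype_card, ZMod.card_units_eq_totient,
      Nat.totient_prime (Fact.out : p.Prime)]
  have hGLcard : Nat.card (GL (Fin 2) (ZMod p)) = (p^2 - 1) * (p^2 - p) := by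
    rw [Matrix.card_GL_field]
    rw [Fin.prod_univ_two]
    rw [ZMod.card p]
    norm_num
  have hker : Nat.card ((Matrix.GeneralLinearGroup.det :
      GL (Fin 2) (ZMod p) →* (ZMod p)ˣ).ker) =
      Nat.card (Matrix.SpecialLinearGroup (Fin 2) (ZMod p)) :=
    (Nat.card_congr ek.toEquiv).symm
  -- assemble: cardSL * (p-1) = (p^2-1)*(p^2-p)
  have key : Nat.card (Matrix.SpecialLinearGroup (Fin 2) (ZMod p)) * (p - 1)
      = (p^2 - 1) * (p^2 - p) := by
    rw [← hGLcard, hGL, hquot, hcardU, hker, mul_comm]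
  have hfac : (p^2 - 1) * (p^2 - p) = ((p + 1) * p * (p - 1)) * (p - 1) := by
    have h1 : p^2 - 1 = (p + 1) * (p - 1) := by simpa using Nat.sq_sub_sq p 1
    have h2 : p^2 - p = p * (p - 1) := by rw [pow_two, Nat.mul_sub_one]
    rw [h1, h2]; ring
  have hcard : Nat.card (Matrix.SpecialLinearGroup (Fin 2) (ZMod p))
      = (p + 1) * p * (p - 1) := by
    have hpos : 0 < p - 1 := by omega
    exact Nat.eq_of_mul_eq_mul_right hpos (by rw [key, hfac])
  rw [hcard]
  have hodd : Odd p := (Fact.out : p.Prime).odd_of_ne_two (by omega)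
  obtain ⟨k, rfl⟩ := hodd
  obtain ⟨m, hm⟩ := Nat.even_mul_succ_self k
  refine ⟨(2 * k + 1) * m, ?_⟩
  have h1 : 2 * k + 1 + 1 = 2 * (k + 1) := by ring
  have h2 : 2 * k + 1 - 1 = 2 * k := by omega
  rw [h1, h2]
  have : k * (k + 1) = 2 * m := by omega
  calc 2 * (k + 1) * (2 * k + 1) * (2 * k) = 4 * (k * (k + 1)) * (2 * k + 1) := by ring
    _ = 4 * (2 * m) * (2 * k + 1) := by rw [this]
    _ = 8 * ((2 * k + 1) * m) := by ring

lemma sl2_sq_eq_one (p : ℕ) [Fact p.Prime] (hp : 5 ≤ p)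
    (A : Matrix.SpecialLinearGroup (Fin 2) (ZMod p)) (hA : A * A = 1) :
    (A : Matrix (Fin 2) (Fin 2) (ZMod p)) = 1 ∨
      (A : Matrix (Fin 2) (Fin 2) (ZMod p)) = -1 := by
  have h2 : (2 : ZMod p) ≠ 0 := by
    have : ((2:ℕ) : ZMod p) ≠ 0 := by
      rw [Ne, ZMod.natCast_eq_zero_iff]
      intro h
      have := Nat.le_of_dvd (by norm_num) h
      omega
    simpa using this
  set a := (A : Matrix (Fin 2) (Fin 2) (ZMod p)) 0 0 with ha
  set b := (A : Matrix (Fin 2) (Fin 2) (ZMod p)) 0 1 with hb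
  set c := (A : Matrix (Fin 2) (Fin 2) (ZMod p)) 1 0 with hc
  set d := (A : Matrix (Fin 2) (Fin 2) (ZMod p)) 1 1 with hd
  have heta : (A : Matrix (Fin 2) (Fin 2) (ZMod p)) = !![a, b; c, d] := by
    rw [ha, hb, hc, hd]; exact Matrix.etaExpand_eq _ |>.symm
  have hdet : a * d - b * c = 1 := by rw [ha, hb, hc, hd, ← Matrix.det_fin_two]; exact A.2
  have hsq : (A : Matrix (Fin 2) (Fin 2) (ZMod p)) * A = 1 := congrArg Subtype.val hA
  have e00 : a * a + b * c = 1 := by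
    have := congrFun (congrFun hsq 0) 0
    simpa [Matrix.mul_apply, Fin.sum_univ_two, Matrix.one_apply, ← ha, ← hb, ← hc, ← hd] using this
  have e01 : a * b + b * d = 0 := by
    have := congrFun (congrFun hsq 0) 1
    simpa [Matrix.mul_apply, Fin.sum_univ_two, Matrix.one_apply, ← ha, ← hb, ← hc, ← hd, mul_comm] using this
  have e10 : c * a + d * c = 0 := by
    have := congrFun (congrFun hsq 1) 0
    simpa [Matrix.mul_apply, Fin.sum_univ_two, Matrix.one_apply, ← ha, ← hb, ← hc, ← hd, mul_comm] using this
  by_cases ht : a + d = 0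
  · exfalso
    exact h2 (by linear_combination (-1 : ZMod p) * e00 - hdet + a * ht)
  · have hb0 : b = 0 := by
      have : b * (a + d) = 0 := by linear_combination e01
      rcases mul_eq_zero.mp this with h | h
      · exact h
      · exact absurd h ht
    have hc0 : c = 0 := by
      have : c * (a + d) = 0 := by linear_combination e10
      rcases mul_eq_zero.mp this with h | h
      · exact h
      · exact absurd h ht
    have had : a * d = 1 := by linear_combination hdet + b * hc0
    have haa : a = 1 ∨ a = -1 := by
      have h' : (a - 1) * (a + 1) = 0 := by linear_combination e00 - b * hc0
      rcases mul_eq_zero.mp h' with h | h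
      · left; linear_combination h
      · right; linear_combination h
    rcases haa with h1 | h1
    · left
      have hdd : d = 1 := by linear_combination had - d * h1
      rw [heta, hb0, hc0, h1, hdd, Matrix.one_fin_two]
    · right
      have hdd : d = -1 := by linear_combination (-1) * had + d * h1
      rw [heta, hb0, hc0, h1, hdd]
      rw [show (-1 : Matrix (Fin 2) (Fin 2) (ZMod p)) = -(1:Matrix (Fin 2) (Fin 2) (ZMod p)) from rfl, Matrix.one_fin_two]
      ext i j
      fin_cases i <;> fin_cases j <;> simp

/-- No connected pentavalent graph on `4n` vertices (`n` odd) admits an arc-transitive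
group of automorphisms isomorphic to `SL(2,p)`, `p ≥ 5` prime. -/
theorem no_SL2_arc_transitive_on_four_n
    {V : Type*} [Fintype V] (Γ : SimpleGraph V) [DecidableRel Γ.Adj]
    (p : ℕ) [Fact p.Prime] (hp : 5 ≤ p)
    (n : ℕ) (hn : 0 < n) (hodd : Odd n)
    (hcard : Fintype.card V = 4 * n)
    (hconn : Γ.Connected) (hdeg : ∀ v : V, Γ.degree v = 5)
    (G : Subgroup (Γ ≃g Γ))
    (harc : ∀ ⦃u v u' v' : V⦄, Γ.Adj u v → Γ.Adj u' v' →
      ∃ g ∈ G, g • u = u' ∧ g • v = v')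
    (hiso : Nonempty (G ≃* Matrix.SpecialLinearGroup (Fin 2) (ZMod p))) :
    False := by
  classical
  obtain ⟨e⟩ := hiso
  haveI : Fintype G := Fintype.ofEquiv _ e.symm.toEquiv
  have hVne : Nonempty V := by
    rw [← Fintype.card_pos_iff, hcard]; omega
  obtain ⟨v0⟩ := hVne
  have hnbr : ∀ w : V, ∃ w', Γ.Adj w w' := by
    intro w
    have h5 : 0 < Γ.degree w := by rw [hdeg w]; norm_num
    obtain ⟨w', hw'⟩ := Finset.card_pos.mp h5
    exact ⟨w', (SimpleGraph.mem_neighborFinset Γ w w').mp hw'⟩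
  obtain ⟨v1, hv01⟩ := hnbr v0
  have htrans : ∀ w : V, ∃ g : G, g • v0 = w := by
    intro w
    obtain ⟨w', hw⟩ := hnbr w
    obtain ⟨g, hg, h1, _⟩ := harc hv01 hw
    exact ⟨⟨g, hg⟩, h1⟩
  have horb : MulAction.orbit G v0 = Set.univ := by
    ext w
    simp only [Set.mem_univ, iff_true]
    obtain ⟨g, hg⟩ := htrans w
    exact ⟨g, hg⟩
  have hcardorb : Fintype.card (MulAction.orbit G v0) = 4 * n := by
    exact (Fintype.card_congr ((Equiv.setCongr horb).trans (Equiv.Set.univ V))).trans hcard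
  have hos := MulAction.card_orbit_mul_card_stabilizer_eq_card_group G v0
  rw [hcardorb] at hos
  have h8 : 8 ∣ Fintype.card G := by
    have := card_SL2_dvd p hp
    rwa [← Nat.card_congr e.toEquiv, Nat.card_eq_fintype_card] at this
  have heven : 2 ∣ Fintype.card (MulAction.stabilizer G v0) := by
    obtain ⟨m, hm⟩ := h8
    rcases Nat.even_or_odd (Fintype.card (MulAction.stabilizer G v0)) with h | h
    · exact h.two_dvd
    · exfalso
      have hodd' : Odd (n * Fintype.card (MulAction.stabilizer G v0)) := hodd.mul h
      obtain ⟨t, ht⟩ := hodd'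
      have hns : 4 * (n * Fintype.card (MulAction.stabilizer G v0)) = 8 * m := by
        rw [← mul_assoc, ← hm, ← hos]
      omega
  obtain ⟨z, hz⟩ := exists_prime_orderOf_dvd_card 2 heven
  have hzG : orderOf (z : G) = 2 := by
    rw [← hz]
    exact orderOf_injective (MulAction.stabilizer G v0).subtype Subtype.coe_injective z
  set g : G := (z : G) with hgdef
  have hg2 : g * g = 1 := by
    have := pow_orderOf_eq_one g
    rwa [hzG, pow_two] at this
  have hg1 : g ≠ 1 := by
    intro h
    rw [h, orderOf_one] at hzG
    omega
  have hA := sl2_sq_eq_one p hp (e g) (by rw [← map_mul, hg2, map_one])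
  have hA' : ((e g : Matrix.SpecialLinearGroup (Fin 2) (ZMod p)) :
      Matrix (Fin 2) (Fin 2) (ZMod p)) = -1 := by
    rcases hA with h | h
    · exact absurd (e.injective (by rw [show e g = 1 from Subtype.ext h, map_one])) hg1
    · exact h
  have hcentral : ∀ h : G, g * h = h * g := by
    intro h
    apply e.injective
    rw [map_mul, map_mul]
    apply Subtype.ext
    show ((e g : Matrix.SpecialLinearGroup (Fin 2) (ZMod p)) :
        Matrix (Fin 2) (Fin 2) (ZMod p)) * (e h) = (e h : Matrix (Fin 2) (Fin 2) (ZMod p)) * (e g)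
    rw [hA', neg_one_mul, mul_neg_one]
  have hz0 : g • v0 = v0 := z.2
  have hfix : ∀ w : V, g • w = w := by
    intro w
    obtain ⟨k, hk⟩ := htrans w
    calc g • w = g • (k • v0) := by rw [hk]
      _ = (g * k) • v0 := (mul_smul g k v0).symm
      _ = (k * g) • v0 := by rw [hcentral k]
      _ = k • (g • v0) := mul_smul k g v0
      _ = k • v0 := by rw [hz0]
      _ = w := hk
  apply hg1
  apply Subtype.ext
  apply DFunLike.ext
  intro w
  exact hfix w
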